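/- Let u : ℝ⁴ → ℝ be a smooth function of (x, y, z, t), and let q : ℝ⁴ → ℝ be a smooth function satisfying the covering equations q_t = u_z q_x and q_y = u_x q_x. Then q_x · (u_{yz} − u_{tx} + u_z u_{xx} − u_x u_{xz}) = 0; in particular, wherever q_x ≠ 0, the function u satisfies the reduced quasi-classical self-dual Yang-Mills equation u_{yz} = u_{tx} − u_z u_{xx} + u_x u_{xz}. -/

import Mathlib

/-- Directional (partial) derivative of a function of `(x, y, z, t) ∈ ℝ⁴`. -/
noncomputable def pd (v : ℝ × ℝ × ℝ × ℝ) (f : ℝ × ℝ × ℝ × ℝ → ℝ) : ℝ × ℝ × ℝ × ℝ → ℝ :=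
  fun p => fderiv ℝ f p v

/-- Unit direction of `x`. -/
def ex : ℝ × ℝ × ℝ × ℝ := (1, 0, 0, 0)
/-- Unit direction of `y`. -/
def ey : ℝ × ℝ × ℝ × ℝ := (0, 1, 0, 0)
/-- Unit direction of `z`. -/
def ez : ℝ × ℝ × ℝ × ℝ := (0, 0, 1, 0)
/-- Unit direction of `t`. -/
def et : ℝ × ℝ × ℝ × ℝ := (0, 0, 0, 1)

/-- The left-hand side of the rYME `u_{yz} - u_{tx} + u_z u_{xx} - u_x u_{xz} = 0`. -/
noncomputable def ryme (u : ℝ × ℝ × ℝ × ℝ → ℝ) : ℝ × ℝ × ℝ × ℝ → ℝ :=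
  fun p => pd ey (pd ez u) p - pd et (pd ex u) p
    + pd ez u p * pd ex (pd ex u) p - pd ex u p * pd ex (pd ez u) p

section Aux

variable {f g : ℝ × ℝ × ℝ × ℝ → ℝ} {v w : ℝ × ℝ × ℝ × ℝ} {p : ℝ × ℝ × ℝ × ℝ}

lemma contDiff_pd (hf : ContDiff ℝ (⊤ : ℕ∞) f) (v) : ContDiff ℝ (⊤ : ℕ∞) (pd v f) :=
  (ContinuousLinearMap.apply ℝ ℝ v).contDiff.comp
    (hf.fderiv_right (m := (⊤ : ℕ∞)) (by exact_mod_cast le_top))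

lemma pd_mul (hf : ContDiff ℝ (⊤ : ℕ∞) f) (hg : ContDiff ℝ (⊤ : ℕ∞) g) :
    pd v (fun p => f p * g p) p = pd v f p * g p + f p * pd v g p := by
  have := fderiv_fun_mul (𝕜 := ℝ) (hf.differentiable (by simp) p)
    (hg.differentiable (by simp) p)
  simp only [pd, this]
  simp [mul_comm]; ring

lemma pd_pd (hf : ContDiff ℝ (⊤ : ℕ∞) f) :
    pd v (pd w f) p = fderiv ℝ (fderiv ℝ f) p v w := by
  have h : DifferentiableAt ℝ (fderiv ℝ f) p :=
    ((hf.fderiv_right (m := (⊤ : ℕ∞)) (by exact_mod_cast le_top)).differentiable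
      (by simp)) p
  simp only [pd]
  rw [show pd w f = fun y => fderiv ℝ f y w from rfl,
    fderiv_clm_apply h (differentiableAt_const w)]
  simp

lemma pd_comm (hf : ContDiff ℝ (⊤ : ℕ∞) f) : pd v (pd w f) p = pd w (pd v f) p := by
  rw [pd_pd hf, pd_pd hf]
  exact second_derivative_symmetric
    (fun y => (hf.differentiable (by simp) y).hasFDerivAt)
    (((hf.fderiv_right (m := (⊤ : ℕ∞)) (by exact_mod_cast le_top)).differentiable
      (by simp) p).hasFDerivAt) v w

end Aux

/-- Compatibility of the level-zero `q`-covering: if `q_t = u_z q_x` and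
`q_y = u_x q_x`, then `q_x · (u_{yz} - u_{tx} + u_z u_{xx} - u_x u_{xz}) = 0`;
wherever `q_x ≠ 0`, `u` satisfies the rYME. -/
theorem q_covering_compatibility (u q : ℝ × ℝ × ℝ × ℝ → ℝ)
    (hu : ContDiff ℝ (⊤ : ℕ∞) u) (hq : ContDiff ℝ (⊤ : ℕ∞) q)
    (h1 : ∀ p, pd et q p = pd ez u p * pd ex q p)
    (h2 : ∀ p, pd ey q p = pd ex u p * pd ex q p) :
    ∀ p, pd ex q p * ryme u p = 0 ∧ (pd ex q p ≠ 0 → ryme u p = 0) := by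
  have h1' : pd et q = fun p => pd ez u p * pd ex q p := funext h1
  have h2' : pd ey q = fun p => pd ex u p * pd ex q p := funext h2
  have huz := contDiff_pd hu ez
  have hux := contDiff_pd hu ex
  have hqx := contDiff_pd hq ex
  intro p
  -- cross derivative q_{xy}
  have exy : pd ey (pd ex q) p
      = pd ex (pd ex u) p * pd ex q p + pd ex u p * pd ex (pd ex q) p := by
    rw [pd_comm hq, h2', pd_mul hux hqx]
  -- cross derivative q_{xt}
  have ext : pd et (pd ex q) p
      = pd ex (pd ez u) p * pd ex q p + pd ez u p * pd ex (pd ex q) p := by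
    rw [pd_comm hq, h1', pd_mul huz hqx]
  -- equality of mixed partials q_{ty} = q_{yt}
  have key := pd_comm (v := ey) (w := et) (p := p) hq
  rw [h1', h2', pd_mul huz hqx, pd_mul hux hqx, exy, ext] at key
  have hmain : pd ex q p * ryme u p = 0 := by
    simp only [ryme]; linear_combination key
  exact ⟨hmain, fun hne => by
    have := mul_eq_zero.mp hmain
    tauto⟩
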